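/- Let κ be an uncountable cardinal with κ^{<κ} = κ, let R be an analytic quasi-order on ^κ2, let T be a DST-tree on 2×2×κ satisfying, with respect to R, properties (i)–(v) of the tree normal form (listed in the context), and let # be a map as in the context. Then for all x, y ∈ ^κ2: (1) if S_T^x ≤_max S_T^y then x R y; (2) if (x,y,ξ) ∈ [S_T], then the map φ defined by φ(s) = s ⊕ (ξ↾lh(s)) is Lipschitz and injective, witnesses S_T^x ≤_max S_T^y, and satisfies #(s) ≤ #(φ(s)) for every s of successor length. In particular, for all x, y: x R y if and only if S_T^x ≤_max S_T^y. -/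

import Mathlib

noncomputable section

/-- A transfinite sequence: a function defined on a proper initial segment of the
ordinals (the first component is the length). -/
def ISeq (A : Type*) := Σ γ : Ordinal, ({o : Ordinal // o < γ} → A)

namespace ISeq

/-- Truncation of a sequence `s` to length `δ` (if `δ` is at least the length of `s`,
this is `s` itself). -/
def restr {A : Type*} (s : ISeq A) (δ : Ordinal) : ISeq A :=
  ⟨min δ s.1, fun x => s.2 ⟨x.1, lt_of_lt_of_le x.2 (min_le_right _ _)⟩⟩

/-- The empty sequence. -/
def emptySeq (A : Type*) : ISeq A := ⟨0, fun x => absurd x.2 (not_lt.mpr (zero_le (a := x.1)))⟩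

/-- The sequence `⟨a⟩⌢s` obtained by prepending `a` to `s`. -/
def cons {A : Type*} (a : A) (s : ISeq A) : ISeq A :=
  ⟨1 + s.1, fun x =>
    if h : x.1 < 1 then a
    else
      s.2 ⟨x.1 - 1, by
        have h1 : (1 : Ordinal) ≤ x.1 := not_lt.mp h
        have h2 : (1 : Ordinal) + (x.1 - 1) < 1 + s.1 := by
          rw [Ordinal.add_sub_cancel_of_le h1]; exact x.2
        exact (add_lt_add_iff_left (1 : Ordinal)).mp h2⟩⟩

/-- The sequence `s⁻`: if `s` has finite length `n + 1` this is `s` restricted to `n`;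
if `s` has infinite length this is `s` itself. -/
def mnus {A : Type*} (s : ISeq A) : ISeq A :=
  if s.1 < Ordinal.omega0 then s.restr (s.1 - 1) else s

/-- The canonical extension of an ordinal sequence to a total function on the
ordinals, with value `0` beyond the length. -/
def ext' (s : ISeq Ordinal) : Ordinal → Ordinal :=
  fun α => if h : α < s.1 then s.2 ⟨α, h⟩ else 0

end ISeq

/-- The constant-`0` sequence `0^{(γ)}` of length `γ`. -/
def zseq (γ : Ordinal) : ISeq Ordinal := ⟨γ, fun _ => 0⟩

/-- `Hes` is the Hessenberg pairing of ordinals: the unique surjective binary function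
on ordinals such that `Hes α β ≤ Hes α' β'` iff `max α β < max α' β'`, or the maxima
are equal and `(α, β)` is lexicographically at most `(α', β')`. -/
def HesProp (Hes : Ordinal → Ordinal → Ordinal) : Prop :=
  (∀ δ : Ordinal, ∃ α β : Ordinal, Hes α β = δ) ∧
    ∀ α β α' β' : Ordinal,
      Hes α β ≤ Hes α' β' ↔
        (max α β < max α' β' ∨
          (max α β = max α' β' ∧ (α < α' ∨ (α = α' ∧ β ≤ β'))))

/-- The pointwise formula for the map `⊕` on pairs of ordinal sequences of the same
length (sequences are coded as total functions on the ordinals).  With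
`ρ(γ,γ') = Hes(γ,γ') + 1`, the recursive definition of `⊕` gives
`(s ⊕ t)(0) = ρ(s 0, t 0)` and, for positions `α > 0`,
`(s ⊕ t)(α) = ρ((sup_{β ≤ α} s β) + ω, ρ(s α, t α))`. -/
def oplusPt (Hes : Ordinal → Ordinal → Ordinal) (s t : Ordinal → Ordinal)
    (α : Ordinal) : Ordinal :=
  if α = 0 then Hes (s 0) (t 0) + 1
  else Hes (sSup (s '' Set.Iic α) + Ordinal.omega0) (Hes (s α) (t α) + 1) + 1

/-- The map `⊕` on pairs of ordinal sequences of the same length. -/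
def oplusSeq (Hes : Ordinal → Ordinal → Ordinal) (s t : ISeq Ordinal) : ISeq Ordinal :=
  ⟨s.1, fun α => oplusPt Hes s.ext' t.ext' α.1⟩

/-- The variant `⊕̃` of `⊕`: `(s ⊕̃ t)(γ) = ((0⌢s) ⊕ (0⌢t))(1 + γ)`. -/
def oplusTilde (Hes : Ordinal → Ordinal → Ordinal) (s t : ISeq Ordinal) : ISeq Ordinal :=
  ⟨s.1, fun α => oplusPt Hes (ISeq.cons 0 s).ext' (ISeq.cons 0 t).ext' (1 + α.1)⟩

/-- Triples of sequences, coding elements of `^{<κ}(2 × 2 × κ)`. -/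
abbrev Tri := ISeq Bool × ISeq Bool × ISeq Ordinal

/-- The empty triple. -/
def emptyTri : Tri := (ISeq.emptySeq Bool, ISeq.emptySeq Bool, ISeq.emptySeq Ordinal)

/-- Simultaneous truncation of a triple. -/
def Tri.restr (p : Tri) (δ : Ordinal) : Tri :=
  (p.1.restr δ, p.2.1.restr δ, p.2.2.restr δ)

/-- `T` is a descriptive set-theoretic tree on `2 × 2 × κ`: its elements are triples
of sequences of a common length `< κ`, with third coordinate valued in `κ`, and `T`
is closed under simultaneous restriction. -/
def IsTree (κ : Cardinal) (T : Set Tri) : Prop :=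
  (∀ p ∈ T, p.1.1 = p.2.1.1 ∧ p.1.1 = p.2.2.1 ∧ p.1.1 < κ.ord ∧ ∀ x, p.2.2.2 x < κ.ord) ∧
    ∀ p ∈ T, ∀ δ : Ordinal, Tri.restr p δ ∈ T

/-- The index set `κ`, i.e. the ordinals below `κ`. -/
abbrev KIdx (κ : Cardinal) := {o : Ordinal // o < κ.ord}

/-- The length-`γ` initial segment of a total function `x : κ → 2`. -/
def brB (κ : Cardinal) (x : KIdx κ → Bool) (γ : Ordinal) : ISeq Bool :=
  ⟨γ, fun α => if h : α.1 < κ.ord then x ⟨α.1, h⟩ else false⟩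

/-- The length-`γ` initial segment of a total function `ξ : κ → Ordinal`. -/
def brO (κ : Cardinal) (ξ : KIdx κ → Ordinal) (γ : Ordinal) : ISeq Ordinal :=
  ⟨γ, fun α => if h : α.1 < κ.ord then ξ ⟨α.1, h⟩ else 0⟩

/-- The projection `proj[T]` of the body of a tree `T` on `2 × 2 × κ`:
`(x, y) ∈ proj[T]` iff there is `ξ ∈ ^κκ` with `(x↾γ, y↾γ, ξ↾γ) ∈ T` for all `γ < κ`. -/
def projT (κ : Cardinal) (T : Set Tri) (x y : KIdx κ → Bool) : Prop :=
  ∃ ξ : KIdx κ → Ordinal, (∀ α, ξ α < κ.ord) ∧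
    ∀ γ : Ordinal, γ < κ.ord → (brB κ x γ, brB κ y γ, brO κ ξ γ) ∈ T

/-- The tree `T̂ = T ∪ {(u, u, 0^{(lh u)}) : u ∈ ^{<κ}2}`. -/
def hatT (κ : Cardinal) (T : Set Tri) : Set Tri :=
  T ∪ {p | ∃ u : ISeq Bool, u.1 < κ.ord ∧ p = (u, u, zseq u.1)}

/-- The trees `S_T^n`. -/
def STn (Hes : Ordinal → Ordinal → Ordinal) (κ : Cardinal) (T : Set Tri) : ℕ → Set Tri
  | 0 =>
    {emptyTri} ∪
      {p | ∃ (u v : ISeq Bool) (s : ISeq Ordinal),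
        p = (u, v, ISeq.cons 0 s) ∧ (u.mnus, v.mnus, s) ∈ hatT κ T}
  | n + 1 =>
    {emptyTri} ∪
      {p | ∃ (u v : ISeq Bool) (s : ISeq Ordinal),
        p = (u, v, ISeq.cons ((n : Ordinal) + 1) s) ∧
          (u, v, ISeq.cons (n : Ordinal) s) ∈ STn Hes κ T n} ∪
      {p | ∃ (u w : ISeq Bool) (s t : ISeq Ordinal),
        p = (u, w, ISeq.cons ((n : Ordinal) + 1) (oplusTilde Hes s t)) ∧
          ∃ v : ISeq Bool, (u, v, ISeq.cons (n : Ordinal) s) ∈ STn Hes κ T n ∧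
            (v, w, ISeq.cons (n : Ordinal) t) ∈ STn Hes κ T n}

/-- The tree `S_T = ⋃ₙ S_T^n`. -/
def STfull (Hes : Ordinal → Ordinal → Ordinal) (κ : Cardinal) (T : Set Tri) : Set Tri :=
  ⋃ n : ℕ, STn Hes κ T n

/-- `s` is a sequence in `^{<κ}κ`: its length and its values are below `κ`. -/
def InDom (κ : Cardinal) (s : ISeq Ordinal) : Prop :=
  s.1 < κ.ord ∧ ∀ α, s.2 α < κ.ord

/-- `t` end-extends `s`. -/
def ExtOf {A : Type*} (s t : ISeq A) : Prop := s.1 ≤ t.1 ∧ t.restr s.1 = s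

/-- `φ` is a Lipschitz (monotone and length-preserving) injective map from
`^{<κ}κ` to `^{<κ}κ`. -/
def IsLipInj (κ : Cardinal) (φ : ISeq Ordinal → ISeq Ordinal) : Prop :=
  (∀ s, InDom κ s → InDom κ (φ s)) ∧
    (∀ s, InDom κ s → (φ s).1 = s.1) ∧
    (∀ s t, InDom κ s → InDom κ t → ExtOf s t → ExtOf (φ s) (φ t)) ∧
    (∀ s t, InDom κ s → InDom κ t → φ s = φ t → s = t)

/-- The quasi-order `≤_max` on DST-trees on `2 × κ`: there is a Lipschitz injective
`φ : ^{<κ}κ → ^{<κ}κ` with `(u, s) ∈ 𝒯 → (u, φ s) ∈ 𝒯'`. -/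
def LeMax (κ : Cardinal) (𝒯 𝒯' : Set (ISeq Bool × ISeq Ordinal)) : Prop :=
  ∃ φ : ISeq Ordinal → ISeq Ordinal, IsLipInj κ φ ∧
    ∀ u s, (u, s) ∈ 𝒯 → (u, φ s) ∈ 𝒯'

/-- The tree `S_T^x = {(u, s) : (u, x↾lh(u), s) ∈ S_T}`. -/
def STx (Hes : Ordinal → Ordinal → Ordinal) (κ : Cardinal) (T : Set Tri)
    (x : KIdx κ → Bool) : Set (ISeq Bool × ISeq Ordinal) :=
  {p | (p.1, brB κ x p.1.1, p.2) ∈ STfull Hes κ T}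

/-- The map `φ(s) = s ⊕ (ξ ↾ lh s)`. -/
def phiMap (Hes : Ordinal → Ordinal → Ordinal) (κ : Cardinal)
    (ξ : KIdx κ → Ordinal) (s : ISeq Ordinal) : ISeq Ordinal :=
  oplusSeq Hes s (brO κ ξ s.1)

section Stmt4Aux

open Cardinal (mk)

universe u

/-! ### Auxiliary lemmas for `stmt4` -/

theorem iseq_ext {A : Type*} (s t : ISeq A) (h1 : s.1 = t.1)
    (h2 : ∀ (α : Ordinal) (h : α < s.1) (h' : α < t.1), s.2 ⟨α, h⟩ = t.2 ⟨α, h'⟩) :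
    s = t := by
  obtain ⟨γ, f⟩ := s
  obtain ⟨δ, g⟩ := t
  dsimp only at h1 h2
  subst h1
  have : f = g := funext fun b => h2 b.1 b.2 b.2
  rw [this]

theorem iseq_zero {A : Type*} (s t : ISeq A) (h : s.1 = 0) (h' : t.1 = 0) : s = t :=
  iseq_ext s t (h.trans h'.symm)
    (fun α hα _ => absurd (h ▸ hα) (not_lt.mpr (zero_le (a := α))))

theorem ext'_lt (s : ISeq.{u+1,u} Ordinal.{u}) {α : Ordinal.{u}} (h : α < s.1) :
    s.ext' α = s.2 ⟨α, h⟩ := dif_pos h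

theorem ext'_ge (s : ISeq.{u+1,u} Ordinal.{u}) {α : Ordinal.{u}} (h : ¬ α < s.1) :
    s.ext' α = 0 := dif_neg h

theorem iseq_ext' (s t : ISeq.{u+1,u} Ordinal.{u}) (h1 : s.1 = t.1)
    (h2 : ∀ α, s.ext' α = t.ext' α) : s = t := by
  refine iseq_ext s t h1 fun α h h' => ?_
  have := h2 α
  rwa [ext'_lt s h, ext'_lt t h'] at this

theorem ext'_restr (s : ISeq.{u+1,u} Ordinal.{u}) {α δ : Ordinal.{u}} (h : α < δ) :
    (s.restr δ).ext' α = s.ext' α := by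
  by_cases h' : α < s.1
  · rw [ext'_lt (s.restr δ) (show α < (s.restr δ).1 from lt_min h h'), ext'_lt s h']
    rfl
  · rw [ext'_ge (s.restr δ) (show ¬ α < (s.restr δ).1 from
      not_lt.2 ((min_le_right δ s.1).trans (not_lt.1 h'))), ext'_ge s h']

theorem extOf_ext' {s t : ISeq.{u+1,u} Ordinal.{u}} (h : ExtOf s t) {α : Ordinal.{u}} (hα : α < s.1) :
    t.ext' α = s.ext' α := by
  conv_rhs => rw [← h.2]
  exact (ext'_restr t hα).symm

theorem mnus_fst {A : Type*} (w : ISeq A) :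
    w.mnus.1 = if w.1 < Ordinal.omega0 then w.1 - 1 else w.1 := by
  unfold ISeq.mnus
  by_cases h : w.1 < Ordinal.omega0
  · rw [if_pos h, if_pos h]
    exact min_eq_left (Ordinal.sub_le_self _ _)
  · rw [if_neg h, if_neg h]

theorem mnus_fst_zero {A : Type*} (w : ISeq A) (h : w.1 ≤ 1) : w.mnus.1 = 0 := by
  rw [mnus_fst, if_pos (lt_of_le_of_lt h Ordinal.one_lt_omega0),
    Ordinal.sub_eq_zero_iff_le.2 h]

theorem mnus_of_infinite {A : Type*} (w : ISeq A) (h : Ordinal.omega0 ≤ w.1) :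
    w.mnus = w := by
  unfold ISeq.mnus
  rw [if_neg (not_lt.2 h)]

theorem cons_fst {A : Type*} (x : A) (s : ISeq A) : (ISeq.cons x s).1 = 1 + s.1 := rfl

theorem cons_fst_ne_zero {A : Type*} (x : A) (s : ISeq A) : (ISeq.cons x s).1 ≠ 0 := by
  rw [cons_fst]
  intro h
  have h1 : (1 : Ordinal) ≤ 1 + s.1 := le_self_add
  rw [h] at h1
  exact absurd h1 (not_le.2 zero_lt_one)

theorem ord_succ_inj {a b : Ordinal} (h : a + 1 = b + 1) : a = b := by
  rw [Ordinal.add_one_eq_succ, Ordinal.add_one_eq_succ] at h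
  exact Order.succ_eq_succ_iff.1 h

theorem hes_inj (Hes : Ordinal → Ordinal → Ordinal) (hHes : HesProp Hes)
    {a b c d : Ordinal} (h : Hes a b = Hes c d) : a = c ∧ b = d := by
  have h1 := (hHes.2 a b c d).1 h.le
  have h2 := (hHes.2 c d a b).1 h.ge
  rcases h1 with h1 | ⟨hm1, hl1⟩
  · rcases h2 with h2 | ⟨hm2, _⟩
    · exact absurd (h1.trans h2) (lt_irrefl _)
    · exact absurd h1 (hm2.symm ▸ lt_irrefl _)
  · rcases h2 with h2 | ⟨hm2, hl2⟩
    · exact absurd (h2.trans_eq hm1) (lt_irrefl _)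
    · rcases hl1 with h1 | ⟨ha, hb⟩
      · rcases hl2 with h2 | ⟨ha', _⟩
        · exact absurd (h1.trans h2) (lt_irrefl _)
        · exact absurd (ha' ▸ h1) (lt_irrefl _)
      · rcases hl2 with h2 | ⟨_, hb'⟩
        · exact absurd (ha ▸ h2) (lt_irrefl _)
        · exact ⟨ha, le_antisymm hb hb'⟩

theorem hes_lt_ord (κ : Cardinal) (hunc : Cardinal.aleph0 < κ)
    (Hes : Ordinal → Ordinal → Ordinal) (hHes : HesProp Hes) {a b : Ordinal}
    (ha : a < κ.ord) (hb : b < κ.ord) : Hes a b < κ.ord := by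
  classical
  have hm : max a b < κ.ord := max_lt ha hb
  have hm1 : max a b + 1 < κ.ord := by
    rw [Ordinal.add_one_eq_succ]
    exact (Cardinal.isSuccLimit_ord hunc.le).succ_lt hm
  have key : ∀ δ : Set.Iio (Hes a b), ∃ p : Set.Iic (max a b) × Set.Iic (max a b),
      Hes p.1.1 p.2.1 = δ.1 := by
    rintro ⟨δ, hδ⟩
    obtain ⟨c, d, hcd⟩ := hHes.1 δ
    have hle : Hes c d ≤ Hes a b := le_of_lt (hcd ▸ hδ)
    have hmax : max c d ≤ max a b := by
      rcases (hHes.2 c d a b).1 hle with h | ⟨h, _⟩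
      · exact h.le
      · exact h.le
    exact ⟨⟨⟨c, le_trans (le_max_left c d) hmax⟩, ⟨d, le_trans (le_max_right c d) hmax⟩⟩, hcd⟩
  choose F hF using key
  have hinj : Function.Injective F := by
    intro p q hpq
    apply Subtype.ext
    rw [← hF p, ← hF q, hpq]
  have h1 : mk (Set.Iio (Hes a b)) ≤ mk (Set.Iic (max a b) × Set.Iic (max a b)) :=
    Cardinal.mk_le_of_injective hinj
  have hIic : Set.Iic (max a b) = Set.Iio (max a b + 1) := by
    ext β
    rw [Set.mem_Iic, Set.mem_Iio, Ordinal.add_one_eq_succ, Order.lt_succ_iff]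
  rw [hIic] at h1
  simp only [Cardinal.mk_prod, Ordinal.mk_Iio_ordinal, Cardinal.lift_id,
    ← Cardinal.lift_mul, Cardinal.lift_le] at h1
  rw [Cardinal.lt_ord]
  exact lt_of_le_of_lt h1
    (Cardinal.mul_lt_of_lt hunc.le (Cardinal.lt_ord.1 hm1) (Cardinal.lt_ord.1 hm1))

theorem kreg (κ : Cardinal) (hunc : Cardinal.aleph0 < κ) (hks : κ ^< κ = κ) :
    κ ≤ (κ.ord).cof := by
  by_contra h
  push_neg at h
  have h1 : κ < κ ^ (κ.ord).cof := Cardinal.lt_power_cof hunc.le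
  have h2 : κ ^ (κ.ord).cof ≤ κ ^< κ := Cardinal.le_powerlt κ h
  rw [hks] at h2
  exact absurd (h1.trans_le h2) (lt_irrefl κ)

theorem ssup_lt (κ : Cardinal) (hunc : Cardinal.aleph0 < κ) (hreg : κ ≤ (κ.ord).cof)
    (f : Ordinal → Ordinal) (hf : ∀ β, f β < κ.ord) {α : Ordinal} (hα : α < κ.ord) :
    sSup (f '' Set.Iic α) < κ.ord := by
  have hα1 : α + 1 < κ.ord := by
    rw [Ordinal.add_one_eq_succ]
    exact (Cardinal.isSuccLimit_ord hunc.le).succ_lt hα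
  have hrange : f '' Set.Iic α =
      Set.range (fun i => f ((Ordinal.ToType.mk (o := α + 1)).symm i).1) := by
    ext β
    constructor
    · rintro ⟨γ, hγ, rfl⟩
      refine ⟨Ordinal.ToType.mk (o := α + 1) ⟨γ, ?_⟩, ?_⟩
      · rw [Set.mem_Iio, Ordinal.add_one_eq_succ]
        exact Order.lt_succ_iff.2 hγ
      · simp only [OrderIso.symm_apply_apply]
    · rintro ⟨i, rfl⟩
      refine ⟨((Ordinal.ToType.mk (o := α + 1)).symm i).1, ?_, rfl⟩
      have h2 := ((Ordinal.ToType.mk (o := α + 1)).symm i).2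
      exact Set.mem_Iic.2 (Order.lt_succ_iff.1 (lt_of_lt_of_eq h2 (Ordinal.add_one_eq_succ α)))
  rw [hrange]
  have hcard : mk ((α + 1).ToType) < (κ.ord).cof := by
    rw [Cardinal.mk_toType]
    exact lt_of_lt_of_le (Cardinal.lt_ord.1 hα1) hreg
  exact Ordinal.iSup_lt_ord hcard (fun i => hf _)

theorem oplusPt_lt (κ : Cardinal) (hunc : Cardinal.aleph0 < κ) (hreg : κ ≤ (κ.ord).cof)
    (Hes : Ordinal → Ordinal → Ordinal) (hHes : HesProp Hes)
    (f g : Ordinal → Ordinal) (hf : ∀ β, f β < κ.ord) (hg : ∀ β, g β < κ.ord)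
    (α : Ordinal) (hα : α < κ.ord) : oplusPt Hes f g α < κ.ord := by
  have hℵ : Cardinal.aleph0 ≤ κ := hunc.le
  have homega : Ordinal.omega0 < κ.ord := Cardinal.omega0_lt_ord.2 hunc
  have hsucc : ∀ {o : Ordinal}, o < κ.ord → o + 1 < κ.ord := fun {o} h => by
    rw [Ordinal.add_one_eq_succ]
    exact (Cardinal.isSuccLimit_ord hℵ).succ_lt h
  have hadd : ∀ {o o' : Ordinal}, o < κ.ord → o' < κ.ord → o + o' < κ.ord :=
    fun {o o'} h h' => by
      rw [Cardinal.lt_ord, Ordinal.card_add]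
      exact Cardinal.add_lt_of_lt hℵ (Cardinal.lt_ord.1 h) (Cardinal.lt_ord.1 h')
  unfold oplusPt
  by_cases h0 : α = 0
  · rw [if_pos h0]
    exact hsucc (hes_lt_ord κ hunc Hes hHes (hf 0) (hg 0))
  · rw [if_neg h0]
    exact hsucc (hes_lt_ord κ hunc Hes hHes (hadd (ssup_lt κ hunc hreg f hf hα) homega)
      (hsucc (hes_lt_ord κ hunc Hes hHes (hf α) (hg α))))

theorem oplusPt_congr (Hes : Ordinal → Ordinal → Ordinal) (f f' g g' : Ordinal → Ordinal)
    (α : Ordinal) (hs : ∀ β ≤ α, f β = f' β) (ht : g α = g' α) :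
    oplusPt Hes f g α = oplusPt Hes f' g' α := by
  unfold oplusPt
  by_cases h0 : α = 0
  · subst h0
    rw [if_pos rfl, if_pos rfl, hs 0 le_rfl, ht]
  · rw [if_neg h0, if_neg h0]
    have himg : f '' Set.Iic α = f' '' Set.Iic α := Set.image_congr (fun β hβ => hs β hβ)
    rw [himg, hs α le_rfl, ht]

theorem oplusPt_inj (Hes : Ordinal → Ordinal → Ordinal) (hHes : HesProp Hes)
    (f f' g : Ordinal → Ordinal) (α : Ordinal)
    (h : oplusPt Hes f g α = oplusPt Hes f' g α) : f α = f' α := by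
  unfold oplusPt at h
  by_cases h0 : α = 0
  · rw [if_pos h0, if_pos h0] at h
    subst h0
    exact (hes_inj Hes hHes (ord_succ_inj h)).1
  · rw [if_neg h0, if_neg h0] at h
    have h1 := (hes_inj Hes hHes (ord_succ_inj h)).2
    exact (hes_inj Hes hHes (ord_succ_inj h1)).1

theorem hatT_len (κ : Cardinal.{u}) (T : Set Tri.{u,u,u,u}) (hT : IsTree κ T)
    {a b : ISeq.{0,u} Bool}
    {s : ISeq.{u+1,u} Ordinal.{u}} (h : (a, b, s) ∈ hatT κ T) : a.1 = s.1 ∧ s.1 < κ.ord := by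
  rcases h with h | ⟨w, hw, he⟩
  · obtain ⟨h1, h2, h3, _⟩ := hT.1 _ h
    exact ⟨h2, h2 ▸ h3⟩
  · simp only [Prod.mk.injEq] at he
    obtain ⟨rfl, rfl, rfl⟩ := he
    exact ⟨rfl, hw⟩

theorem stn_len (Hes : Ordinal.{u} → Ordinal.{u} → Ordinal.{u}) (κ : Cardinal.{u})
    (T : Set Tri.{u,u,u,u}) (hT : IsTree κ T) (n : ℕ) :
    ∀ (u v : ISeq.{0,u} Bool) (σ : ISeq.{u+1,u} Ordinal.{u}), (u, v, σ) ∈ STn Hes κ T n →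
      (u.1 = 0 ∧ σ.1 = 0) ∨ (σ.1 = 1 + u.mnus.1 ∧ u.mnus.1 < κ.ord) := by
  induction n with
  | zero =>
    intro u v σ h
    simp only [STn] at h
    rcases h with h | ⟨a, b, s, he, hm⟩
    · have h' : (u, v, σ) = emptyTri := h
      simp only [emptyTri, Prod.mk.injEq] at h'
      obtain ⟨rfl, rfl, rfl⟩ := h'
      exact Or.inl ⟨rfl, rfl⟩
    · simp only [Prod.mk.injEq] at he
      obtain ⟨rfl, rfl, rfl⟩ := he
      obtain ⟨he1, he2⟩ := hatT_len κ T hT hm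
      right
      constructor
      · rw [cons_fst, he1]
      · rw [he1]; exact he2
  | succ n ih =>
    intro u v σ h
    simp only [STn] at h
    rcases h with (h | ⟨a, b, s, he, hm⟩) | ⟨a, b, s, t, he, c, hm1, hm2⟩
    · have h' : (u, v, σ) = emptyTri := h
      simp only [emptyTri, Prod.mk.injEq] at h'
      obtain ⟨rfl, rfl, rfl⟩ := h'
      exact Or.inl ⟨rfl, rfl⟩
    · simp only [Prod.mk.injEq] at he
      obtain ⟨rfl, rfl, rfl⟩ := he
      rcases ih _ _ _ hm with ⟨_, h0⟩ | ⟨h1, h2⟩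
      · exact absurd h0 (cons_fst_ne_zero _ _)
      · right
        refine ⟨?_, h2⟩
        rw [cons_fst] at h1 ⊢
        exact h1
    · simp only [Prod.mk.injEq] at he
      obtain ⟨rfl, rfl, rfl⟩ := he
      rcases ih _ _ _ hm1 with ⟨_, h0⟩ | ⟨h1, h2⟩
      · exact absurd h0 (cons_fst_ne_zero _ _)
      · right
        refine ⟨?_, h2⟩
        rw [cons_fst] at h1 ⊢
        exact h1

theorem stn_mnus (Hes : Ordinal.{u} → Ordinal.{u} → Ordinal.{u}) (κ : Cardinal.{u})
    (T : Set Tri.{u,u,u,u}) (n : ℕ) :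
    ∀ (u v u' v' : ISeq.{0,u} Bool) (σ : ISeq.{u+1,u} Ordinal.{u}), (u, v, σ) ∈ STn Hes κ T n → σ.1 ≠ 0 →
      u'.mnus = u.mnus → v'.mnus = v.mnus → (u', v', σ) ∈ STn Hes κ T n := by
  induction n with
  | zero =>
    intro u v u' v' σ h hσ hu hv
    simp only [STn] at h ⊢
    rcases h with h | ⟨a, b, s, he, hm⟩
    · have h' : (u, v, σ) = emptyTri := h
      simp only [emptyTri, Prod.mk.injEq] at h'
      exact absurd (congrArg Sigma.fst h'.2.2) hσ
    · simp only [Prod.mk.injEq] at he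
      obtain ⟨rfl, rfl, rfl⟩ := he
      refine Or.inr ⟨u', v', s, rfl, ?_⟩
      rw [hu, hv]
      exact hm
  | succ n ih =>
    intro u v u' v' σ h hσ hu hv
    simp only [STn] at h ⊢
    rcases h with (h | ⟨a, b, s, he, hm⟩) | ⟨a, b, s, t, he, c, hm1, hm2⟩
    · have h' : (u, v, σ) = emptyTri := h
      simp only [emptyTri, Prod.mk.injEq] at h'
      exact absurd (congrArg Sigma.fst h'.2.2) hσ
    · simp only [Prod.mk.injEq] at he
      obtain ⟨rfl, rfl, rfl⟩ := he
      exact Or.inl (Or.inr ⟨u', v', s, rfl,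
        ih _ _ u' v' _ hm (cons_fst_ne_zero _ _) hu hv⟩)
    · simp only [Prod.mk.injEq] at he
      obtain ⟨rfl, rfl, rfl⟩ := he
      exact Or.inr ⟨u', v', s, t, rfl, c,
        ih _ _ u' c _ hm1 (cons_fst_ne_zero _ _) hu rfl,
        ih _ _ c v' _ hm2 (cons_fst_ne_zero _ _) rfl hv⟩

end Stmt4Aux

/-- Let `κ` be uncountable with `κ^{<κ} = κ`, `R` an analytic quasi-order on `^κ2`,
`T` a DST-tree on `2 × 2 × κ` in normal form for `R` (properties (i)–(v)), and `#` a
map as in Proposition `⊕`(2).  Then for all `x, y ∈ ^κ2`: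
(1) `S_T^x ≤_max S_T^y` implies `x R y`;
(2) if `(x, y, ξ) ∈ [S_T]` then `φ(s) = s ⊕ (ξ↾lh s)` is Lipschitz injective,
witnesses `S_T^x ≤_max S_T^y`, and `#s ≤ #(φ s)` for `s` of successor length;
in particular (3) `x R y ↔ S_T^x ≤_max S_T^y`. -/
theorem stmt4 (κ : Cardinal) (hunc : Cardinal.aleph0 < κ) (hks : κ ^< κ = κ)
    (Hes : Ordinal → Ordinal → Ordinal) (hHes : HesProp Hes)
    (sharp : Ordinal → (Ordinal → Ordinal) → Ordinal)
    (hsharp_ext : ∀ γ : Ordinal, ∀ s s' : Ordinal → Ordinal,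
      (∀ α < γ + 1, s α = s' α) → sharp γ s = sharp γ s')
    (hsharp_mono : ∀ γ < κ.ord, ∀ s t : Ordinal → Ordinal,
      (∀ α < γ + 1, s α < κ.ord) → (∀ α < γ + 1, t α < κ.ord) →
      sharp γ s ≤ sharp γ (oplusPt Hes s t))
    (hsharp_bij : ∀ γ < κ.ord,
      (∀ s : Ordinal → Ordinal, (∀ α < γ + 1, s α < κ.ord) → sharp γ s < κ.ord) ∧
      (∀ s s' : Ordinal → Ordinal, (∀ α < γ + 1, s α < κ.ord) →
        (∀ α < γ + 1, s' α < κ.ord) → sharp γ s = sharp γ s' → ∀ α < γ + 1, s α = s' α) ∧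
      (∀ δ < κ.ord, ∃ s : Ordinal → Ordinal,
        (∀ α < γ + 1, s α < κ.ord) ∧ sharp γ s = δ))
    (R : (KIdx κ → Bool) → (KIdx κ → Bool) → Prop)
    (hrefl : ∀ x, R x x) (htrans : ∀ x y z, R x y → R y z → R x z)
    (T : Set Tri) (hT : IsTree κ T)
    (hRT : ∀ x y, R x y ↔ projT κ T x y)
    (hT1 : ∀ (t : ISeq Ordinal) (u v u' v' : ISeq Bool),
      (u, v, t) ∈ T → (u', v', t) ∈ T → u = u' ∧ v = v')
    (hT2a : ∀ u : ISeq Bool, u.1 < κ.ord → (u, u, zseq u.1) ∈ STfull Hes κ T)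
    (hT2b : ∀ u v : ISeq Bool, u.1 < κ.ord → v.1 < κ.ord →
      (u, v, zseq u.1) ∈ STfull Hes κ T → Ordinal.omega0 ≤ u.1 → u = v)
    (hT3 : ∀ (u v w : ISeq Bool) (s t : ISeq Ordinal),
      (u, v, s) ∈ STfull Hes κ T → (v, w, t) ∈ STfull Hes κ T →
      (u, w, oplusSeq Hes s t) ∈ STfull Hes κ T)
    (hT4 : ∀ s : ISeq Ordinal, s.1 < κ.ord → (∀ α, s.2 α < κ.ord) →
      Ordinal.omega0 ≤ s.1 → s ≠ zseq s.1 →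
      {p : ISeq Bool × ISeq Bool | p.1 ≠ p.2 ∧ (p.1, p.2, s) ∈ STfull Hes κ T}.Finite)
    (hT5 : ∀ x y, R x y ↔ projT κ (STfull Hes κ T) x y) :
    (∀ x y, LeMax κ (STx Hes κ T x) (STx Hes κ T y) → R x y) ∧
    (∀ x y (ξ : KIdx κ → Ordinal), (∀ α, ξ α < κ.ord) →
      (∀ γ : Ordinal, γ < κ.ord → (brB κ x γ, brB κ y γ, brO κ ξ γ) ∈ STfull Hes κ T) →
      IsLipInj κ (phiMap Hes κ ξ) ∧
      (∀ u s, (u, s) ∈ STx Hes κ T x → (u, phiMap Hes κ ξ s) ∈ STx Hes κ T y) ∧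
      (∀ (s : ISeq Ordinal) (γ : Ordinal), InDom κ s → s.1 = γ + 1 →
        sharp γ s.ext' ≤ sharp γ (phiMap Hes κ ξ s).ext')) ∧
    (∀ x y, R x y ↔ LeMax κ (STx Hes κ T x) (STx Hes κ T y)) := by
  classical
  have hℵ : Cardinal.aleph0 ≤ κ := hunc.le
  have hreg : κ ≤ (κ.ord).cof := kreg κ hunc hks
  have homega : Ordinal.omega0 < κ.ord := Cardinal.omega0_lt_ord.2 hunc
  have hzero : (0 : Ordinal) < κ.ord := Ordinal.omega0_pos.trans homega
  have hone : (1 : Ordinal) < κ.ord := Ordinal.one_lt_omega0.trans homega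
  have hsucc : ∀ {o : Ordinal}, o < κ.ord → o + 1 < κ.ord := fun {o} h => by
    rw [Ordinal.add_one_eq_succ]
    exact (Cardinal.isSuccLimit_ord hℵ).succ_lt h
  have hadd : ∀ {o o' : Ordinal}, o < κ.ord → o' < κ.ord → o + o' < κ.ord :=
    fun {o o'} h h' => by
      rw [Cardinal.lt_ord, Ordinal.card_add]
      exact Cardinal.add_lt_of_lt hℵ (Cardinal.lt_ord.1 h) (Cardinal.lt_ord.1 h')
  have part2 : ∀ (x y : KIdx κ → Bool) (ξ : KIdx κ → Ordinal), (∀ α, ξ α < κ.ord) →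
      (∀ γ : Ordinal, γ < κ.ord → (brB κ x γ, brB κ y γ, brO κ ξ γ) ∈ STfull Hes κ T) →
      IsLipInj κ (phiMap Hes κ ξ) ∧
      (∀ u s, (u, s) ∈ STx Hes κ T x → (u, phiMap Hes κ ξ s) ∈ STx Hes κ T y) ∧
      (∀ (s : ISeq Ordinal) (γ : Ordinal), InDom κ s → s.1 = γ + 1 →
        sharp γ s.ext' ≤ sharp γ (phiMap Hes κ ξ s).ext') := by
    intro x y ξ hξ hbr
    have hbrOval : ∀ (γ β : Ordinal), (brO κ ξ γ).ext' β < κ.ord := by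
      intro γ β
      by_cases hb : β < γ
      · rw [ext'_lt _ (show β < (brO κ ξ γ).1 from hb)]
        by_cases hb2 : β < κ.ord
        · rw [show (brO κ ξ γ).2 ⟨β, hb⟩ = ξ ⟨β, hb2⟩ from dif_pos hb2]
          exact hξ _
        · rw [show (brO κ ξ γ).2 ⟨β, hb⟩ = 0 from dif_neg hb2]
          exact hzero
      · rw [ext'_ge _ (show ¬ β < (brO κ ξ γ).1 from hb)]
        exact hzero
    have hbrOeq : ∀ {γ γ' β : Ordinal}, β < γ → β < γ' →
        (brO κ ξ γ).ext' β = (brO κ ξ γ').ext' β := by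
      intro γ γ' β h h'
      rw [ext'_lt _ (show β < (brO κ ξ γ).1 from h),
        ext'_lt _ (show β < (brO κ ξ γ').1 from h')]
      rfl
    have hextval : ∀ (s : ISeq Ordinal), (∀ b, s.2 b < κ.ord) → ∀ β, s.ext' β < κ.ord := by
      intro s hs β
      by_cases hb : β < s.1
      · rw [ext'_lt s hb]; exact hs _
      · rw [ext'_ge s hb]; exact hzero
    have hφval : ∀ (s : ISeq Ordinal) {α : Ordinal} (h : α < s.1),
        (phiMap Hes κ ξ s).ext' α = oplusPt Hes s.ext' (brO κ ξ s.1).ext' α :=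
      fun s α h => ext'_lt (phiMap Hes κ ξ s) h
    have hin : ∀ s, InDom κ s → InDom κ (phiMap Hes κ ξ s) := by
      intro s hs
      refine ⟨hs.1, ?_⟩
      rintro ⟨α, hα⟩
      exact oplusPt_lt κ hunc hreg Hes hHes s.ext' (brO κ ξ s.1).ext'
        (hextval s hs.2) (hbrOval s.1) α (hα.trans hs.1)
    have hmono : ∀ s t, ExtOf s t → ExtOf (phiMap Hes κ ξ s) (phiMap Hes κ ξ t) := by
      intro s t hst
      refine ⟨hst.1, ?_⟩
      refine iseq_ext' _ _ (min_eq_left hst.1) ?_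
      intro α
      by_cases hα : α < s.1
      · rw [ext'_restr (phiMap Hes κ ξ t) (show α < (phiMap Hes κ ξ s).1 from hα),
          hφval t (hα.trans_le hst.1), hφval s hα]
        apply oplusPt_congr
        · intro β hβ
          exact extOf_ext' hst (lt_of_le_of_lt hβ hα)
        · exact hbrOeq (hα.trans_le hst.1) hα
      · rw [ext'_ge _ (show ¬ α < ((phiMap Hes κ ξ t).restr (phiMap Hes κ ξ s).1).1 from
            not_lt.2 (le_trans (min_le_left _ _) (not_lt.1 hα))),
          ext'_ge _ (show ¬ α < (phiMap Hes κ ξ s).1 from hα)]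
    have hinj : ∀ s t, phiMap Hes κ ξ s = phiMap Hes κ ξ t → s = t := by
      intro s t h
      have h1' := congrArg (fun z : ISeq Ordinal => z.1) h
      have h1 : s.1 = t.1 := h1'
      have h2 : ∀ α, (phiMap Hes κ ξ s).ext' α = (phiMap Hes κ ξ t).ext' α :=
        fun α => congrFun (congrArg ISeq.ext' h) α
      refine iseq_ext' s t h1 fun α => ?_
      by_cases hα : α < s.1
      · have hα' : α < t.1 := h1 ▸ hα
        have e := ((hφval s hα).symm.trans (h2 α)).trans (hφval t hα')
        have e' : oplusPt Hes t.ext' (brO κ ξ t.1).ext' α =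
            oplusPt Hes t.ext' (brO κ ξ s.1).ext' α :=
          oplusPt_congr Hes t.ext' t.ext' (brO κ ξ t.1).ext' (brO κ ξ s.1).ext' α
            (fun β _ => rfl) (hbrOeq hα' hα)
        exact oplusPt_inj Hes hHes s.ext' t.ext' (brO κ ξ s.1).ext' α (e.trans e')
      · rw [ext'_ge s hα, ext'_ge t (show ¬ α < t.1 from h1 ▸ hα)]
    have hmap : ∀ u s, (u, s) ∈ STx Hes κ T x → (u, phiMap Hes κ ξ s) ∈ STx Hes κ T y := by
      intro w s hm
      have hm' : (w, brB κ x w.1, s) ∈ STfull Hes κ T := hm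
      show (w, brB κ y w.1, phiMap Hes κ ξ s) ∈ STfull Hes κ T
      obtain ⟨n, hn⟩ := Set.mem_iUnion.1 hm'
      rcases stn_len Hes κ T hT n w (brB κ x w.1) s hn with ⟨hw0, hs0⟩ | ⟨hslen, hmκ⟩
      · have he : (w, brB κ y w.1, phiMap Hes κ ξ s) = emptyTri := by
          unfold emptyTri
          refine Prod.ext ?_ (Prod.ext ?_ ?_)
          · exact iseq_zero _ _ hw0 rfl
          · exact iseq_zero _ _ hw0 rfl
          · exact iseq_zero _ _ hs0 rfl
        rw [he]
        exact Set.mem_iUnion.2 ⟨0, Or.inl rfl⟩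
      · have hs1κ : s.1 < κ.ord := by
          rw [hslen]; exact hadd hone hmκ
        have hbase := hbr s.1 hs1κ
        have hdi : w.1 = s.1 ∨ (w.1 = 0 ∧ s.1 = 1) := by
          rcases lt_or_ge w.1 Ordinal.omega0 with hfin | hinf
          · obtain ⟨k, hk⟩ := Ordinal.lt_omega0.1 hfin
            obtain _ | k := k
            · right
              refine ⟨by rw [hk, Nat.cast_zero], ?_⟩
              rw [hslen, mnus_fst, if_pos hfin, hk, Nat.cast_zero,
                Ordinal.sub_eq_zero_iff_le.2 (zero_le (a := (1 : Ordinal))), add_zero]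
            · left
              have hk' : w.1 = 1 + (k : Ordinal) := by
                rw [hk, show k + 1 = 1 + k from Nat.add_comm k 1, Nat.cast_add, Nat.cast_one]
              rw [hslen, mnus_fst, if_pos hfin, hk', Ordinal.add_sub_cancel]
          · left
            rw [hslen, mnus_of_infinite _ hinf, Ordinal.one_add_of_omega0_le hinf]
        have h2 : (brB κ x w.1, brB κ y w.1, brO κ ξ s.1) ∈ STfull Hes κ T := by
          rcases hdi with hcase | ⟨hw0, hs1⟩
          · rw [hcase]; exact hbase
          · obtain ⟨n', hn'⟩ := Set.mem_iUnion.1 hbase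
            refine Set.mem_iUnion.2 ⟨n', stn_mnus Hes κ T n' _ _ _ _ _ hn' ?_ ?_ ?_⟩
            · show s.1 ≠ 0
              rw [hs1]; exact one_ne_zero
            · exact iseq_zero _ _
                (mnus_fst_zero _ (show (brB κ x w.1).1 ≤ 1 from
                  hw0.trans_le (zero_le (a := (1 : Ordinal)))))
                (mnus_fst_zero _ (show (brB κ x s.1).1 ≤ 1 from hs1.le))
            · exact iseq_zero _ _
                (mnus_fst_zero _ (show (brB κ y w.1).1 ≤ 1 from
                  hw0.trans_le (zero_le (a := (1 : Ordinal)))))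
                (mnus_fst_zero _ (show (brB κ y s.1).1 ≤ 1 from hs1.le))
        exact hT3 w (brB κ x w.1) (brB κ y w.1) s (brO κ ξ s.1) hm' h2
    have hsh : ∀ (s : ISeq Ordinal) (γ : Ordinal), InDom κ s → s.1 = γ + 1 →
        sharp γ s.ext' ≤ sharp γ (phiMap Hes κ ξ s).ext' := by
      intro s γ hs hγ
      have hγ1 : γ < s.1 := by
        rw [hγ, Ordinal.add_one_eq_succ]; exact Order.lt_succ γ
      have hγκ : γ < κ.ord := hγ1.trans hs.1
      have h1 := hsharp_mono γ hγκ s.ext' (brO κ ξ s.1).ext'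
        (fun α _ => hextval s hs.2 α) (fun α _ => hbrOval s.1 α)
      have h2 : sharp γ (oplusPt Hes s.ext' (brO κ ξ s.1).ext') =
          sharp γ (phiMap Hes κ ξ s).ext' :=
        hsharp_ext γ _ _ (fun α hα => (hφval s (show α < s.1 by rw [hγ]; exact hα)).symm)
      exact h2 ▸ h1
    exact ⟨⟨hin, fun s _ => rfl, fun s t _ _ h => hmono s t h, fun s t _ _ h => hinj s t h⟩,
      hmap, hsh⟩
  have part1 : ∀ x y, LeMax κ (STx Hes κ T x) (STx Hes κ T y) → R x y := by
    intro x y hle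
    obtain ⟨φ, ⟨hdom, hlen, hmono, _⟩, hmapφ⟩ := hle
    have hz : ∀ γ : Ordinal, γ < κ.ord → InDom κ (zseq γ) :=
      fun γ h => ⟨h, fun _ => hzero⟩
    set ξ : KIdx κ → Ordinal := fun α => (φ (zseq (α.1 + 1))).ext' α.1 with hξdef
    have hξκ : ∀ α, ξ α < κ.ord := by
      rintro ⟨α, hα⟩
      have hd := hdom _ (hz _ (hsucc hα))
      show (φ (zseq (α + 1))).ext' α < κ.ord
      by_cases hb : α < (φ (zseq (α + 1))).1
      · rw [ext'_lt _ hb]; exact hd.2 _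
      · rw [ext'_ge _ hb]; exact hzero
    have hval : ∀ (α γ : Ordinal), α < γ → γ < κ.ord →
        (φ (zseq γ)).ext' α = (φ (zseq (α + 1))).ext' α := by
      intro α γ hαγ hγ
      have hα1 : α + 1 ≤ γ := by
        rw [Ordinal.add_one_eq_succ]; exact Order.succ_le_of_lt hαγ
      have hext : ExtOf (zseq (α + 1)) (zseq γ) :=
        ⟨hα1, iseq_ext _ _ (min_eq_left hα1) (fun β h h' => rfl)⟩
      have hm := hmono _ _ (hz _ (hsucc (hαγ.trans hγ))) (hz γ hγ) hext
      refine extOf_ext' hm ?_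
      rw [hlen _ (hz _ (hsucc (hαγ.trans hγ)))]
      show α < α + 1
      rw [Ordinal.add_one_eq_succ]
      exact Order.lt_succ α
    have key : ∀ γ : Ordinal, γ < κ.ord →
        (brB κ x γ, brB κ y γ, brO κ ξ γ) ∈ STfull Hes κ T := by
      intro γ hγ
      have h1 : ((brB κ x γ), zseq γ) ∈ STx Hes κ T x := by
        show (brB κ x γ, brB κ x γ, zseq γ) ∈ STfull Hes κ T
        exact hT2a (brB κ x γ) hγ
      have h3 : (brB κ x γ, brB κ y γ, φ (zseq γ)) ∈ STfull Hes κ T := hmapφ _ _ h1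
      have h4 : φ (zseq γ) = brO κ ξ γ := by
        refine iseq_ext' _ _ ?_ ?_
        · rw [hlen _ (hz γ hγ)]
          rfl
        · intro α
          by_cases hα : α < γ
          · rw [ext'_lt (brO κ ξ γ) (show α < (brO κ ξ γ).1 from hα),
              show (brO κ ξ γ).2 ⟨α, hα⟩ = ξ ⟨α, hα.trans hγ⟩ from dif_pos (hα.trans hγ)]
            exact hval α γ hα hγ
          · rw [ext'_ge (brO κ ξ γ) (show ¬ α < (brO κ ξ γ).1 from hα),
              ext'_ge _ (show ¬ α < (φ (zseq γ)).1 by rw [hlen _ (hz γ hγ)]; exact hα)]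
      rw [← h4]
      exact h3
    exact (hT5 x y).2 ⟨ξ, hξκ, key⟩
  refine ⟨part1, part2, fun x y => ⟨fun hr => ?_, part1 x y⟩⟩
  obtain ⟨ξ, hξ, hmem⟩ := (hT5 x y).1 hr
  obtain ⟨hlip, hmapξ, _⟩ := part2 x y ξ hξ hmem
  exact ⟨phiMap Hes κ ξ, hlip, hmapξ⟩
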